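/- Let p be an odd prime, q = p^m with m = 2t+1 odd. For 0 ≤ i ≤ t, the p-cyclotomic coset modulo p^m − 1 containing 1 + p^i, i.e. the set {(1+p^i)·p^j mod (p^m−1) : j ≥ 0}, has size exactly m. -/

import Mathlib

theorem stmt_9 (p t : ℕ) (hp : p.Prime) (hp2 : Odd p) (m : ℕ) (hm : m = 2 * t + 1)
    (i : ℕ) (hi : i ≤ t) :
    Set.ncard {x : ZMod (p ^ m - 1) |
        ∃ j : ℕ, x = ((1 + p ^ i : ℕ) : ZMod (p ^ m - 1)) * (p : ZMod (p ^ m - 1)) ^ j} = m := by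
  have h2 : 2 ≤ p := hp.two_le
  have hpo : p % 2 = 1 := Nat.odd_iff.mp hp2
  have hp3 : 3 ≤ p := by omega
  have hm1 : 1 ≤ m := by omega
  have hpmp : p ≤ p ^ m := Nat.le_self_pow (by omega) p
  set N := p ^ m - 1 with hNdef
  have hN2 : 2 ≤ N := by omega
  haveI : NeZero N := ⟨by omega⟩
  set a : ZMod N := ((1 + p ^ i : ℕ) : ZMod N) with ha
  have hpm1 : (p : ZMod N) ^ m = 1 := by
    have h1 : ((p ^ m : ℕ) : ZMod N) = ((N + 1 : ℕ) : ZMod N) := by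
      congr 1
      omega
    push_cast at h1
    rwa [ZMod.natCast_self, zero_add] at h1
  have hu : IsUnit (p : ZMod N) := by
    refine IsUnit.of_mul_eq_one ((p : ZMod N) ^ (m - 1)) ?_
    calc (p : ZMod N) * (p : ZMod N) ^ (m - 1) = (p : ZMod N) ^ (m - 1 + 1) :=
          (pow_succ' _ _).symm
      _ = (p : ZMod N) ^ m := by congr 1; omega
      _ = 1 := hpm1
  -- key lemma: no smaller period
  have hfix : ∀ d : ℕ, 0 < d → d < m → a * (p : ZMod N) ^ d = a → False := by
    intro d hd0 hdm hfd
    obtain ⟨u, huv⟩ := hu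
    have hum : u ^ m = 1 := by
      apply Units.ext
      rw [Units.val_pow_eq_pow_val, huv, hpm1, Units.val_one]
    have key : ∀ (v : (ZMod N)ˣ), a * (v : ZMod N) = a →
        ∀ x : ℤ, a * ((v ^ x : (ZMod N)ˣ) : ZMod N) = a := by
      intro v hv x
      have hnat : ∀ n : ℕ, a * ((v ^ n : (ZMod N)ˣ) : ZMod N) = a := by
        intro n
        induction n with
        | zero => simp
        | succ n ih =>
          rw [pow_succ, Units.val_mul, ← mul_assoc, ih, hv]
      cases x with
      | ofNat n => simpa using hnat n
      | negSucc n =>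
        have h1 := hnat (n + 1)
        rw [zpow_negSucc]
        calc a * ((((v ^ (n+1))⁻¹ : (ZMod N)ˣ)) : ZMod N)
            = (a * ((v ^ (n+1) : (ZMod N)ˣ) : ZMod N)) *
                (((v ^ (n+1))⁻¹ : (ZMod N)ˣ) : ZMod N) := by rw [h1]
          _ = a * (((v ^ (n+1) * (v ^ (n+1))⁻¹ : (ZMod N)ˣ)) : ZMod N) := by
                rw [mul_assoc, Units.val_mul]
          _ = a := by simp
    set g := Nat.gcd d m with hg
    have hg0 : 0 < g := Nat.gcd_pos_of_pos_left m hd0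
    have hgd : g ∣ d := Nat.gcd_dvd_left d m
    have hgm : g ∣ m := Nat.gcd_dvd_right d m
    have hgle : g ≤ d := Nat.le_of_dvd hd0 hgd
    have hbez : (g : ℤ) = (d : ℤ) * Int.gcdA d m + (m : ℤ) * Int.gcdB d m := by
      have h := Int.gcd_eq_gcd_ab (d : ℤ) (m : ℤ)
      simpa [Int.gcd_natCast_natCast] using h
    have hud : a * ((u ^ d : (ZMod N)ˣ) : ZMod N) = a := by
      rw [Units.val_pow_eq_pow_val, huv]; exact hfd
    have hug : a * ((u ^ (g : ℤ) : (ZMod N)ˣ) : ZMod N) = a := by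
      rw [hbez, zpow_add, zpow_mul, zpow_mul, zpow_natCast, zpow_natCast, hum, one_zpow,
        mul_one]
      exact key (u ^ d) hud _
    rw [zpow_natCast, Units.val_pow_eq_pow_val, huv] at hug
    -- convert to natural-number divisibility
    have hcast : (((1 + p ^ i) * p ^ g : ℕ) : ZMod N) = ((1 + p ^ i : ℕ) : ZMod N) := by
      push_cast
      push_cast [ha] at hug
      linear_combination hug
    have hmod : (1 + p ^ i) * p ^ g ≡ (1 + p ^ i) [MOD N] :=
      (ZMod.natCast_eq_natCast_iff _ _ _).mp hcast
    have hpg1 : 1 ≤ p ^ g := Nat.one_le_pow _ _ (by omega)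
    have hdvd : N ∣ (1 + p ^ i) * p ^ g - (1 + p ^ i) :=
      (Nat.modEq_iff_dvd' (Nat.le_mul_of_pos_right _ (by omega))).mp hmod.symm
    -- g ≤ t
    have hgt : g ≤ t := by
      obtain ⟨k, hk⟩ := hgm
      have hk3 : 3 ≤ k := by
        rcases Nat.lt_or_ge k 3 with h | h
        · interval_cases k <;> omega
        · exact h
      have h3g : 3 * g ≤ k * g := Nat.mul_le_mul_right g hk3
      have : g * k = k * g := Nat.mul_comm g k
      omega
    -- size bound
    have hit : p ^ i ≤ p ^ t := Nat.pow_le_pow_right (by omega) hi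
    have hpt1 : 1 ≤ p ^ t := Nat.one_le_pow _ _ (by omega)
    have hbound : (1 + p ^ i) * p ^ g ≤ p ^ m := by
      calc (1 + p ^ i) * p ^ g ≤ (2 * p ^ t) * p ^ g :=
            Nat.mul_le_mul_right _ (by omega)
        _ = 2 * p ^ (t + g) := by rw [mul_assoc, ← pow_add]
        _ ≤ 2 * p ^ (2 * t) := Nat.mul_le_mul_left _ (Nat.pow_le_pow_right (by omega) (by omega))
        _ ≤ p * p ^ (2 * t) := Nat.mul_le_mul_right _ (by omega)
        _ = p ^ m := by rw [← pow_succ']; congr 1; omega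
    have hpg3 : 3 ≤ p ^ g := le_trans hp3 (Nat.le_self_pow (by omega) p)
    have hX3 : 3 * (1 + p ^ i) ≤ (1 + p ^ i) * p ^ g := by
      calc 3 * (1 + p ^ i) = (1 + p ^ i) * 3 := Nat.mul_comm _ _
        _ ≤ (1 + p ^ i) * p ^ g := Nat.mul_le_mul_left _ hpg3
    have hX0 : 0 < (1 + p ^ i) * p ^ g - (1 + p ^ i) := by omega
    have hle := Nat.le_of_dvd hX0 hdvd
    have hA2 : 2 ≤ 1 + p ^ i := by
      have : 1 ≤ p ^ i := Nat.one_le_pow _ _ (by omega)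
      omega
    have hsub : (1 + p ^ i) + ((1 + p ^ i) * p ^ g - (1 + p ^ i)) = (1 + p ^ i) * p ^ g := by
      omega
    omega
  -- the set equals the image of range m
  have hSet : {x : ZMod N | ∃ j : ℕ, x = a * (p : ZMod N) ^ j} =
      ↑((Finset.range m).image (fun j => a * (p : ZMod N) ^ j)) := by
    ext x
    simp only [Set.mem_setOf_eq, Finset.coe_image, Set.mem_image, Finset.mem_coe,
      Finset.mem_range]
    constructor
    · rintro ⟨j, rfl⟩
      refine ⟨j % m, Nat.mod_lt _ (by omega), ?_⟩
      have hpe : (p : ZMod N) ^ j = (p : ZMod N) ^ (j % m) := by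
        conv_lhs => rw [← Nat.mod_add_div j m]
        rw [pow_add, pow_mul, hpm1, one_pow, mul_one]
      rw [hpe]
    · rintro ⟨j, hj, rfl⟩
      exact ⟨j, rfl⟩
  rw [hSet, Set.ncard_coe_finset]
  rw [Finset.card_image_of_injOn, Finset.card_range]
  have H : ∀ j k : ℕ, j < m → k < m → j ≤ k → a * (p : ZMod N) ^ j = a * (p : ZMod N) ^ k →
      j = k := by
    intro j k hj hk hjk heq
    by_contra hne
    have hd0 : 0 < k - j := by omega
    have heq2 : a * (p : ZMod N) ^ j = (a * (p : ZMod N) ^ (k - j)) * (p : ZMod N) ^ j := by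
      rw [mul_assoc, ← pow_add]
      rw [heq]
      congr 2
      omega
    have hcan : a = a * (p : ZMod N) ^ (k - j) :=
      IsUnit.mul_right_cancel (hu.pow j) heq2
    exact hfix (k - j) hd0 (by omega) hcan.symm
  intro j hj k hk hjk
  simp only [Finset.mem_coe, Finset.mem_range] at hj hk
  rcases le_total j k with h | h
  · exact H j k hj hk h hjk
  · exact (H k j hk hj h hjk.symm).symm
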